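/- Every bounded set A ⊆ ℝ^d is contained in a closed ball of radius √(d/(2d+2)) · diam(A). (Jung's inequality.) -/

import Mathlib

set_option maxHeartbeats 1000000


open Metric

noncomputable section

abbrev Euc (d : ℕ) := EuclideanSpace ℝ (Fin d)

def Spherical {d : ℕ} (A : Set (Euc d)) : Prop :=
  ∃ (c : Euc d) (ρ : ℝ), A ⊆ Metric.sphere c ρ

noncomputable def circumradius {d : ℕ} (A : Set (Euc d)) : ℝ :=
  sInf {ρ : ℝ | ∃ c : Euc d, A ⊆ Metric.closedBall c ρ}

def SetCongruent {d D : ℕ} (A : Set (Euc d)) (A' : Set (Euc D)) : Prop :=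
  ∃ f : Euc d → Euc D, Isometry f ∧ f '' A = A'

def DiameterRamsey {d : ℕ} (A : Set (Euc d)) : Prop :=
  ∀ r : ℕ, 0 < r → ∃ (n : ℕ) (B : Set (Euc n)), B.Finite ∧
    Metric.diam B = Metric.diam A ∧
    ∀ χ : Euc n → Fin r, ∃ A' : Set (Euc n), A' ⊆ B ∧ SetCongruent A A' ∧
      ∀ x ∈ A', ∀ y ∈ A', χ x = χ y

section JungAux
open Finset

-- Step A: existence of a global minimizer of the max-distance function
lemma exists_cheb {d : ℕ} (S : Finset (Euc d)) (hS : S.Nonempty) :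
    ∃ c : Euc d, ∀ c' : Euc d,
      S.sup' hS (fun p => dist c p) ≤ S.sup' hS (fun p => dist c' p) := by
  obtain ⟨p0, hp0⟩ := id hS
  set f : Euc d → ℝ := fun c => S.sup' hS (fun p => dist c p) with hf
  have hcont : Continuous f := by
    rw [continuous_iff_continuousAt]
    intro x
    exact ContinuousAt.finset_sup'_apply hS (fun p _ => (continuous_id.dist continuous_const).continuousAt)
  have hcomp : IsCompact (closedBall p0 (f p0)) := isCompact_closedBall _ _
  have hne : (closedBall p0 (f p0)).Nonempty := by
    refine ⟨p0, mem_closedBall_self ?_⟩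
    exact le_trans dist_nonneg (Finset.le_sup' _ hp0)
  obtain ⟨c, hcball, hcmin⟩ := hcomp.exists_isMinOn hne hcont.continuousOn
  refine ⟨c, fun c' => ?_⟩
  by_cases h : c' ∈ closedBall p0 (f p0)
  · exact hcmin h
  · have h1 : f p0 < dist c' p0 := by
      simpa [dist_comm] using (mem_closedBall.not.mp h)
    have h2 : dist c' p0 ≤ f c' := Finset.le_sup' _ hp0
    exact le_trans (hcmin (mem_closedBall_self (le_trans dist_nonneg (Finset.le_sup' _ hp0)))) (le_trans h1.le h2)

open RealInnerProductSpace in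
lemma center_mem_hull {d : ℕ} (S : Finset (Euc d)) (hS : S.Nonempty) (c : Euc d) {ρ : ℝ}
    (hρ : ρ = S.sup' hS (fun p => dist c p))
    (hmin : ∀ c', ρ ≤ S.sup' hS (fun p => dist c' p)) :
    c ∈ convexHull ℝ (↑(S.filter (fun p => dist c p = ρ)) : Set (Euc d)) := by
  by_contra hc
  set T := S.filter (fun p => dist c p = ρ) with hT
  have hρ0 : 0 ≤ ρ := by
    obtain ⟨p0, hp0⟩ := id hS
    exact le_trans dist_nonneg (hρ ▸ Finset.le_sup' _ hp0)
  have hTne : T.Nonempty := by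
    obtain ⟨p, hp, hpe⟩ := Finset.exists_mem_eq_sup' hS (fun p => dist c p)
    exact ⟨p, Finset.mem_filter.mpr ⟨hp, by rw [hρ, hpe]⟩⟩
  set K := convexHull ℝ (↑T : Set (Euc d)) with hK
  have hKconv : Convex ℝ K := convex_convexHull _ _
  have hKcomp : IsCompact K := T.finite_toSet.isCompact_convexHull (𝕜 := ℝ)
  have hKne : K.Nonempty := hTne.to_set.mono (subset_convexHull ℝ _)
  obtain ⟨q, hqK, hq⟩ :=
    exists_norm_eq_iInf_of_complete_convex hKne hKcomp.isClosed.isComplete hKconv c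
  have hproj : ∀ w ∈ K, ⟪c - q, w - q⟫ ≤ 0 :=
    (norm_eq_iInf_iff_real_inner_le_zero hKconv hqK).mp hq
  set v := q - c with hv
  have hvne : v ≠ 0 := sub_ne_zero.mpr (fun h => hc (h ▸ hqK))
  have hvpos : 0 < ‖v‖ := norm_pos_iff.mpr hvne
  -- key inner-product inequality for farthest points
  have key1 : ∀ p ∈ T, ⟪c - p, v⟫ ≤ -‖v‖ ^ 2 := by
    intro p hp
    have hpK : (p : Euc d) ∈ K := subset_convexHull ℝ _ (by exact_mod_cast hp)
    have h1 : ⟪c - q, p - q⟫ ≤ 0 := hproj p hpK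
    have heq : ⟪c - p, v⟫ = -‖v‖ ^ 2 + ⟪c - q, p - q⟫ := by
      rw [← real_inner_self_eq_norm_sq, hv]
      simp only [inner_sub_left, inner_sub_right]
      rw [real_inner_comm p q, real_inner_comm c q, real_inner_comm c p]
      ring
    linarith
  classical
  set g : Euc d → ℝ := fun p => if p ∈ T then 1 else (ρ - dist c p) / (2 * ‖v‖) with hg
  have hgpos : ∀ p ∈ S, 0 < g p := by
    intro p hp
    by_cases hpT : p ∈ T
    · simp [hg, hpT]
    · have hlt : dist c p < ρ :=
        lt_of_le_of_ne (hρ ▸ Finset.le_sup' _ hp)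
          (fun h => hpT (Finset.mem_filter.mpr ⟨hp, h⟩))
      simp only [hg, hpT, if_false]
      apply div_pos (by linarith) (by positivity)
  set t := S.inf' hS g with htdef
  have htpos : 0 < t := (Finset.lt_inf'_iff hS).mpr hgpos
  have ht1 : t ≤ 1 := by
    obtain ⟨p, hpT⟩ := hTne
    exact le_trans (Finset.inf'_le _ (Finset.mem_filter.mp hpT).1) (by simp [hg, hpT])
  have hclose : ∀ p ∈ S, dist (c + t • v) p < ρ := by
    intro p hp
    by_cases hpT : p ∈ T
    · have hdp : dist c p = ρ := (Finset.mem_filter.mp hpT).2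
      have hsq : dist (c + t • v) p ^ 2 < ρ ^ 2 := by
        rw [dist_eq_norm, show c + t • v - p = (c - p) + t • v from by abel]
        rw [norm_add_sq_real, real_inner_smul_right, norm_smul, Real.norm_eq_abs,
          abs_of_pos htpos]
        have h2 : ⟪c - p, v⟫ ≤ -‖v‖ ^ 2 := key1 p hpT
        have h3 : ‖c - p‖ = ρ := by rw [← dist_eq_norm, hdp]
        rw [h3]
        have h4 : (t * ‖v‖) ^ 2 = t ^ 2 * ‖v‖ ^ 2 := by ring
        nlinarith [sq_nonneg ‖v‖, mul_pos htpos hvpos]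
      exact lt_of_pow_lt_pow_left₀ 2 hρ0 hsq
    · have hlt : dist c p < ρ :=
        lt_of_le_of_ne (hρ ▸ Finset.le_sup' _ hp)
          (fun h => hpT (Finset.mem_filter.mpr ⟨hp, h⟩))
      have htg : t ≤ (ρ - dist c p) / (2 * ‖v‖) := by
        refine le_trans (Finset.inf'_le g hp) ?_
        simp [hg, hpT]
      have h5 : dist (c + t • v) p ≤ dist c p + t * ‖v‖ := by
        calc dist (c + t • v) p ≤ dist (c + t • v) c + dist c p := dist_triangle _ _ _
          _ = t * ‖v‖ + dist c p := by
              rw [dist_self_add_left, norm_smul, Real.norm_eq_abs, abs_of_pos htpos]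
          _ = dist c p + t * ‖v‖ := by ring
      have h6 : t * ‖v‖ < ρ - dist c p := by
        have h7 : t * ‖v‖ ≤ (ρ - dist c p) / 2 := by
          rw [div_mul_eq_div_div] at htg
          calc t * ‖v‖ ≤ ((ρ - dist c p) / 2 / ‖v‖) * ‖v‖ :=
                mul_le_mul_of_nonneg_right htg (norm_nonneg v)
            _ = (ρ - dist c p) / 2 := by field_simp
        linarith
      linarith
  have hcontra := hmin (c + t • v)
  have : S.sup' hS (fun p => dist (c + t • v) p) < ρ := (Finset.sup'_lt_iff hS).mpr hclose
  linarith

open RealInnerProductSpace in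
lemma jung_finset {d : ℕ} (D : ℝ) (hD : 0 ≤ D) (S : Finset (Euc d)) (hS : S.Nonempty)
    (hcard : S.card ≤ d + 1) (hdist : ∀ p ∈ S, ∀ q ∈ S, dist p q ≤ D) :
    ∃ c : Euc d, ∀ p ∈ S, dist c p ≤ Real.sqrt (↑d / (2 * ↑d + 2)) * D := by
  classical
  obtain ⟨c, hc⟩ := exists_cheb S hS
  set ρ := S.sup' hS (fun p => dist c p) with hρ
  have hρ0 : 0 ≤ ρ := by
    obtain ⟨p0, hp0⟩ := id hS
    exact le_trans dist_nonneg (Finset.le_sup' _ hp0)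
  refine ⟨c, fun p hp => le_trans (Finset.le_sup' _ hp) ?_⟩
  have hmem := center_mem_hull S hS c rfl hc
  set T := S.filter (fun p => dist c p = ρ) with hT
  have hTS : T ⊆ S := Finset.filter_subset _ _
  have hTne : T.Nonempty := by
    obtain ⟨p', hp', hpe⟩ := Finset.exists_mem_eq_sup' hS (fun p => dist c p)
    exact ⟨p', Finset.mem_filter.mpr ⟨hp', hpe.symm⟩⟩
  rw [Finset.convexHull_eq] at hmem
  obtain ⟨w, hw0, hw1, hwc⟩ := hmem
  have hcm : ∑ q ∈ T, w q • q = c := by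
    rw [← hwc, Finset.centerMass]
    rw [hw1]
    simp
  have hzero : ∑ q ∈ T, w q • (q - c) = 0 := by
    have : ∑ q ∈ T, w q • (q - c) = (∑ q ∈ T, w q • q) - (∑ q ∈ T, w q) • c := by
      rw [Finset.sum_smul]
      rw [← Finset.sum_sub_distrib]
      congr 1; ext q; rw [smul_sub]
    rw [this, hcm, hw1, one_smul, sub_self]
  -- key inequality for each p ∈ T
  have key : ∀ p ∈ T, 2 * ρ ^ 2 ≤ D ^ 2 * (1 - w p) := by
    intro p hp
    have hdp : dist c p = ρ := (Finset.mem_filter.mp hp).2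
    have claim1 : ∑ q ∈ T, w q * ‖q - p‖ ^ 2 = 2 * ρ ^ 2 := by
      have e1 : ∀ q ∈ T, w q * ‖q - p‖ ^ 2
          = w q * (2 * ρ ^ 2) + 2 * ⟪w q • (q - c), c - p⟫ := by
        intro q hq
        have hdq : dist c q = ρ := (Finset.mem_filter.mp hq).2
        have : ‖q - p‖ ^ 2 = 2 * ρ ^ 2 + 2 * ⟪q - c, c - p⟫ := by
          rw [show q - p = (q - c) + (c - p) from by abel, norm_add_sq_real]
          have h1 : ‖q - c‖ = ρ := by rw [← dist_eq_norm, dist_comm, hdq]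
          have h2 : ‖c - p‖ = ρ := by rw [← dist_eq_norm, hdp]
          rw [h1, h2]; ring
        rw [this, real_inner_smul_left]; ring
      rw [Finset.sum_congr rfl e1, Finset.sum_add_distrib, ← Finset.sum_mul, hw1,
        ← Finset.mul_sum, ← sum_inner, hzero]
      simp
    have claim2 : ∑ q ∈ T, w q * ‖q - p‖ ^ 2 ≤ D ^ 2 * (1 - w p) := by
      have hsplit : ∑ q ∈ T, w q * ‖q - p‖ ^ 2 = ∑ q ∈ T.erase p, w q * ‖q - p‖ ^ 2 := by
        rw [← Finset.sum_erase_add _ _ hp]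
        simp
      rw [hsplit]
      have hbound : ∀ q ∈ T.erase p, w q * ‖q - p‖ ^ 2 ≤ w q * D ^ 2 := by
        intro q hq
        have hqT := Finset.mem_of_mem_erase hq
        have h1 : ‖q - p‖ ≤ D := by
          rw [← dist_eq_norm]; exact hdist q (hTS hqT) p (hTS hp)
        have h2 : ‖q - p‖ ^ 2 ≤ D ^ 2 := by nlinarith [norm_nonneg (q - p)]
        exact mul_le_mul_of_nonneg_left h2 (hw0 q hqT)
      calc ∑ q ∈ T.erase p, w q * ‖q - p‖ ^ 2 ≤ ∑ q ∈ T.erase p, w q * D ^ 2 :=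
            Finset.sum_le_sum hbound
        _ = (∑ q ∈ T.erase p, w q) * D ^ 2 := by rw [Finset.sum_mul]
        _ = (1 - w p) * D ^ 2 := by
            rw [show ∑ q ∈ T.erase p, w q = (∑ q ∈ T, w q) - w p from by
              rw [← Finset.sum_erase_add _ _ hp]; ring, hw1]
        _ = D ^ 2 * (1 - w p) := by ring
    linarith [claim1 ▸ claim2]
  -- sum the key inequality with weights w p
  have hm1 : 1 ≤ T.card := Finset.card_pos.mpr hTne
  have hmd : T.card ≤ d + 1 := le_trans (Finset.card_le_card hTS) hcard
  set m : ℝ := (T.card : ℝ) with hm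
  have hm1' : (1:ℝ) ≤ m := by rw [hm]; exact_mod_cast hm1
  have hmd' : m ≤ (d:ℝ) + 1 := by
    rw [hm]; exact_mod_cast hmd
  have hsumsq : 1 ≤ m * ∑ p ∈ T, w p ^ 2 := by
    have := sq_sum_le_card_mul_sum_sq (s := T) (f := w)
    rw [hw1] at this
    simpa using this
  have hsum : 2 * ρ ^ 2 ≤ D ^ 2 * (1 - ∑ p ∈ T, w p ^ 2) := by
    have step : ∀ p ∈ T, w p * (2 * ρ ^ 2) ≤ w p * (D ^ 2 * (1 - w p)) := fun p hp =>
      mul_le_mul_of_nonneg_left (key p hp) (hw0 p hp)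
    have := Finset.sum_le_sum step
    rw [← Finset.sum_mul] at this
    rw [hw1, one_mul] at this
    calc 2 * ρ ^ 2 ≤ ∑ p ∈ T, w p * (D ^ 2 * (1 - w p)) := this
      _ = D ^ 2 * ((∑ p ∈ T, w p) - ∑ p ∈ T, w p ^ 2) := by
          rw [← Finset.sum_sub_distrib, Finset.mul_sum]
          congr 1; ext p; ring
      _ = D ^ 2 * (1 - ∑ p ∈ T, w p ^ 2) := by rw [hw1]
  -- conclude ρ² ≤ d/(2d+2) * D²
  have hρsq : ρ ^ 2 ≤ (↑d / (2 * ↑d + 2)) * D ^ 2 := by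
    have hmpos : 0 < m := lt_of_lt_of_le one_pos hm1'
    have h1 : 1 / m ≤ ∑ p ∈ T, w p ^ 2 := by
      rw [div_le_iff₀ hmpos]
      linarith [hsumsq]
    have h2 : 2 * ρ ^ 2 ≤ D ^ 2 * (1 - 1 / m) := by
      have hD2 : 0 ≤ D ^ 2 := sq_nonneg D
      nlinarith [hsum]
    have h3 : 1 - 1 / m ≤ (d:ℝ) / ((d:ℝ) + 1) := by
      have hd1 : (0:ℝ) < (d:ℝ) + 1 := by positivity
      have : 1 / ((d:ℝ) + 1) ≤ 1 / m := one_div_le_one_div_of_le hmpos hmd'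
      have : 1 - 1/m ≤ 1 - 1/((d:ℝ)+1) := by linarith
      rw [show (d:ℝ)/((d:ℝ)+1) = 1 - 1/((d:ℝ)+1) from by field_simp; ring]
      exact this
    have hD2 : 0 ≤ D ^ 2 := sq_nonneg D
    have h4 : 2 * ρ ^ 2 ≤ D ^ 2 * ((d:ℝ) / ((d:ℝ) + 1)) :=
      le_trans h2 (mul_le_mul_of_nonneg_left h3 hD2)
    have hd1 : (0:ℝ) < (d:ℝ) + 1 := by positivity
    rw [show (↑d / (2 * ↑d + 2)) * D ^ 2 = D ^ 2 * ((d:ℝ) / ((d:ℝ) + 1)) / 2 from by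
      field_simp]
    linarith
  have : ρ ≤ Real.sqrt ((↑d / (2 * ↑d + 2)) * D ^ 2) := by
    rw [Real.le_sqrt hρ0]
    · exact hρsq
    · positivity
  calc ρ ≤ Real.sqrt ((↑d / (2 * ↑d + 2)) * D ^ 2) := this
    _ = Real.sqrt (↑d / (2 * ↑d + 2)) * D := by
        rw [Real.sqrt_mul (by positivity), Real.sqrt_sq hD]

end JungAux

theorem stmt4 {d : ℕ} (A : Set (Euc d)) (hA : Bornology.IsBounded A) :
    ∃ c : Euc d,
      A ⊆ Metric.closedBall c (Real.sqrt (d / (2 * d + 2)) * Metric.diam A) := by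
  classical
  rcases A.eq_empty_or_nonempty with hAe | hAne
  · exact ⟨0, by simp [hAe]⟩
  set D := Metric.diam A with hD
  set r := Real.sqrt (↑d / (2 * ↑d + 2)) * D with hr
  have hD0 : 0 ≤ D := diam_nonneg
  have hr0 : 0 ≤ r := mul_nonneg (Real.sqrt_nonneg _) hD0
  have hinter : ∀ I : Finset A, I.card ≤ Module.finrank ℝ (Euc d) + 1 →
      (⋂ a ∈ I, closedBall (a : Euc d) r).Nonempty := by
    intro I hI
    rcases I.eq_empty_or_nonempty with hIe | hIne
    · simp [hIe]
    set S : Finset (Euc d) := I.image (fun a : A => (a : Euc d)) with hSd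
    have hSne : S.Nonempty := hIne.image _
    have hScard : S.card ≤ d + 1 := by
      have h1 : S.card ≤ I.card := Finset.card_image_le
      have h2 : Module.finrank ℝ (Euc d) = d := finrank_euclideanSpace_fin
      rw [h2] at hI
      omega
    have hdist : ∀ p ∈ S, ∀ q ∈ S, dist p q ≤ D := by
      intro p hp q hq
      obtain ⟨a, _, rfl⟩ := Finset.mem_image.mp hp
      obtain ⟨b, _, rfl⟩ := Finset.mem_image.mp hq
      exact dist_le_diam_of_mem hA a.2 b.2
    obtain ⟨c, hc⟩ := jung_finset D hD0 S hSne hScard hdist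
    refine ⟨c, Set.mem_iInter₂.mpr fun a ha => ?_⟩
    exact mem_closedBall.mpr (hc a (Finset.mem_image.mpr ⟨a, ha, rfl⟩))
  have hhelly := Convex.helly_theorem_compact' (𝕜 := ℝ) (F := fun a : A => closedBall (a : Euc d) r)
    (fun a => convex_closedBall _ _) (fun a => isCompact_closedBall _ _) hinter
  obtain ⟨c, hc⟩ := hhelly
  refine ⟨c, fun x hx => ?_⟩
  have := Set.mem_iInter.mp hc ⟨x, hx⟩
  rw [mem_closedBall] at this ⊢
  rw [dist_comm]
  exact this
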